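/- arXiv:2006.12118 — 3 statements merged into one kernel-verified Lean document; each statement's English description precedes it below -/
import Mathlib

section
/- Let n ≥ 3 and let P(x,y) = (1/(n·α(n))) · (1 − |x|²)/|x − y|ⁿ be the Poisson kernel of the unit ball in ℝⁿ. Then for each i = 1, …, n, lim_{h → 0} ∫_{|y|=1} | yᵢ/α(n) − (P(h·eᵢ, y) − P(0, y))/h | dS(y) = 0, where eᵢ is the i-th standard basis vector and dS is the (n−1)-dimensional surface measure on the unit sphere. -/
open MeasureTheory Filter Metric Topology

noncomputable section

abbrev Euc (n : ℕ) := EuclideanSpace ℝ (Fin n)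

/-- The Laplacian of a function on `ℝⁿ`, as the sum of second partial derivatives. -/
def lap (n : ℕ) (φ : Euc n → ℝ) (x : Euc n) : ℝ :=
  ∑ i : Fin n,
    fderiv ℝ (fun z => fderiv ℝ φ z (EuclideanSpace.single i 1)) x (EuclideanSpace.single i 1)

/-- `u` solves `-Δu = f` in the sense of distributions on `ℝⁿ`. -/
def IsDistribSol (n : ℕ) (u f : Euc n → ℝ) : Prop :=
  ∀ φ : Euc n → ℝ, ContDiff ℝ (⊤ : ℕ∞) φ → HasCompactSupport φ →
    -∫ x, u x * lap n φ x = ∫ x, f x * φ x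

/-- Bochner almost periodicity: every sequence of translates has a uniformly
convergent subsequence. -/
def AlmostPeriodic (n : ℕ) (f : Euc n → ℝ) : Prop :=
  Continuous f ∧
    ∀ x : ℕ → Euc n, ∃ k : ℕ → ℕ, StrictMono k ∧ ∃ g : Euc n → ℝ,
      TendstoUniformly (fun j z => f (z + x (k j))) g atTop

/-- `α(n)`: the Lebesgue volume of the unit ball of `ℝⁿ`. -/
def alphaB (n : ℕ) : ℝ := (volume (ball (0 : Euc n) 1)).toReal

/-- The Poisson kernel of the unit ball. -/
def PoisK (n : ℕ) (x y : Euc n) : ℝ :=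
  1 / (n * alphaB n) * ((1 - ‖x‖ ^ 2) / ‖x - y‖ ^ n)

/-- Green's function of the unit ball (n ≥ 3):
`G(x,y) = Φ(y-x) - 1/(n(n-2)α(n)) ‖|y|·x - y/|y|‖^{-(n-2)}`. -/
def GreenB (n : ℕ) (x y : Euc n) : ℝ :=
  1 / (n * ((n : ℝ) - 2) * alphaB n) * (1 / ‖y - x‖ ^ (n - 2))
    - 1 / (n * ((n : ℝ) - 2) * alphaB n) * (1 / ‖‖y‖ • x - ‖y‖⁻¹ • y‖ ^ (n - 2))


open scoped ENNReal NNReal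

/-! ### Auxiliary definitions for the difference quotient -/

private def rr (h a : ℝ) : ℝ := Real.sqrt (1 - 2*a*h + h^2)

private def dq (n : ℕ) (h a : ℝ) : ℝ :=
  1/(n * alphaB n) *
    ((2*a - h) * (∑ k ∈ Finset.range n, rr h a ^ k) / ((1 + rr h a) * rr h a ^ n)
      - h / rr h a ^ n)

private def GG (n : ℕ) (h a : ℝ) : ℝ := a / alphaB n - dq n h a

private lemma alphaB_pos (n : ℕ) : 0 < alphaB n := by
  have h1 : 0 < volume (ball (0 : Euc n) 1) := measure_ball_pos _ _ one_pos
  have h2 : volume (ball (0 : Euc n) 1) < ⊤ := measure_ball_lt_top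
  exact ENNReal.toReal_pos h1.ne' h2.ne

private lemma rr_sq_pos {h a : ℝ} (hh : |h| ≤ 1/2) (ha : |a| ≤ 1) : 0 < 1 - 2*a*h + h^2 := by
  have key : 2*a*h ≤ 2*|h| := by
    calc 2*a*h ≤ |2*a*h| := le_abs_self _
    _ = 2 * (|a| * |h|) := by rw [abs_mul, abs_mul, abs_of_nonneg (by norm_num : (0:ℝ) ≤ 2)]; ring
    _ ≤ 2 * (1 * |h|) := by
        have h0 := abs_nonneg h
        gcongr
    _ = 2*|h| := by ring
  nlinarith [key, sq_abs h, sq_nonneg (1/2 - |h|), hh]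

private lemma rr_pos {h a : ℝ} (hh : |h| ≤ 1/2) (ha : |a| ≤ 1) : 0 < rr h a :=
  Real.sqrt_pos.mpr (rr_sq_pos hh ha)

private lemma rr_zero (a : ℝ) : rr 0 a = 1 := by simp [rr]

private lemma GG_zero (n : ℕ) (hn : 3 ≤ n) (a : ℝ) : GG n 0 a = 0 := by
  have hα := (alphaB_pos n).ne'
  have hn0 : (n:ℝ) ≠ 0 := by positivity
  simp only [GG, dq, rr_zero, one_pow, Finset.sum_const, Finset.card_range, nsmul_eq_mul,
    mul_one]
  field_simp
  ring

private lemma alg_id {r R S h a : ℝ} (hh0 : h ≠ 0) (hr1 : 1+r ≠ 0) (hR : R ≠ 0)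
    (hgeom : (1-r)*S = 1 - R) (hrelsq : r^2 = 1-2*a*h+h^2) :
    ((1-h^2)/R - 1)/h = (2*a-h)*S/((1+r)*R) - h/R := by
  field_simp
  linear_combination (-(1+r)) * hgeom - S * hrelsq

private lemma abs_coord_le {n : ℕ} (y : Euc n) (i : Fin n) : |y i| ≤ ‖y‖ := by
  rw [EuclideanSpace.norm_eq]
  have h1 : |y i| = Real.sqrt (‖y i‖^2) := by
    rw [Real.sqrt_sq_eq_abs, abs_norm, Real.norm_eq_abs]
  rw [h1]
  apply Real.sqrt_le_sqrt
  exact Finset.single_le_sum (f := fun k => ‖y k‖^2) (fun k _ => sq_nonneg _) (Finset.mem_univ i)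

private lemma key_id (n : ℕ) (i : Fin n) {h : ℝ} (hh0 : h ≠ 0) (hh : |h| ≤ 1/2)
    {y : Euc n} (hy : ‖y‖ = 1) :
    y i / alphaB n - (PoisK n (h • EuclideanSpace.single i 1) y - PoisK n 0 y) / h
      = GG n h (y i) := by
  set a := y i with ha_def
  have ha : |a| ≤ 1 := hy ▸ abs_coord_le y i
  have hr2 : ‖h • EuclideanSpace.single i (1:ℝ) - y‖^2 = 1 - 2*a*h + h^2 := by
    rw [norm_sub_sq_real, norm_smul, EuclideanSpace.norm_single, real_inner_smul_left,
      EuclideanSpace.inner_single_left, hy]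
    simp [Real.norm_eq_abs, sq_abs]
    ring
  have hrr : ‖h • EuclideanSpace.single i (1:ℝ) - y‖ = rr h a := by
    rw [rr, ← hr2, Real.sqrt_sq (norm_nonneg _)]
  have hrpos := rr_pos hh ha
  have hr0 : rr h a ≠ 0 := hrpos.ne'
  have hr1 : (1:ℝ) + rr h a ≠ 0 := by positivity
  have hgeom : (1 - rr h a) * (∑ k ∈ Finset.range n, rr h a ^ k) = 1 - rr h a ^ n := by
    linear_combination -(geom_sum_mul (rr h a) n)
  have hrelsq : rr h a ^ 2 = 1 - 2*a*h + h^2 := Real.sq_sqrt (rr_sq_pos hh ha).le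
  have hP0 : PoisK n 0 y = 1/(n*alphaB n) := by
    simp [PoisK, hy]
  have hP : PoisK n (h • EuclideanSpace.single i 1) y
      = 1/(n*alphaB n) * ((1 - h^2) / rr h a ^ n) := by
    rw [PoisK, hrr, norm_smul, EuclideanSpace.norm_single, norm_one, mul_one,
      Real.norm_eq_abs, sq_abs]
  rw [hP, hP0, GG, dq]
  set r := rr h a with hrdef
  set S := ∑ k ∈ Finset.range n, r ^ k with hSdef
  have hmain : ((1-h^2)/r^n - 1)/h = (2*a-h)*S/((1+r)*r^n) - h/r^n :=
    alg_id hh0 hr1 (pow_ne_zero _ hr0) hgeom hrelsq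
  have : (1/(n*alphaB n) * ((1 - h^2) / r^n) - 1/(n*alphaB n))/h
      = 1/(n*alphaB n) * (((1-h^2)/r^n - 1)/h) := by ring
  rw [this, hmain]

/-! ### Uniform bound via compactness -/

private def KK : Set (ℝ × ℝ) := Set.Icc (-(1/2):ℝ) (1/2) ×ˢ Set.Icc (-1:ℝ) 1

private lemma KK_compact : IsCompact KK := isCompact_Icc.prod isCompact_Icc

private lemma GG_contOn (n : ℕ) : ContinuousOn (fun p : ℝ × ℝ => GG n p.1 p.2) KK := by
  have hrc : Continuous (fun p : ℝ × ℝ => rr p.1 p.2) := by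
    apply Real.continuous_sqrt.comp
    fun_prop
  have hrpos : ∀ p ∈ KK, 0 < rr p.1 p.2 := by
    rintro ⟨h, a⟩ ⟨hh, ha⟩
    exact rr_pos (abs_le.mpr ⟨by simpa using hh.1, hh.2⟩) (abs_le.mpr ⟨ha.1, ha.2⟩)
  unfold GG dq
  have hSc : Continuous (fun p : ℝ × ℝ => ∑ k ∈ Finset.range n, rr p.1 p.2 ^ k) := by
    exact continuous_finset_sum _ fun k _ => hrc.pow k
  apply ContinuousOn.sub
  · exact (continuous_snd.div_const _).continuousOn
  · apply ContinuousOn.mul continuousOn_const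
    apply ContinuousOn.sub
    · apply ContinuousOn.div
      · exact ((continuous_const.mul continuous_snd).sub continuous_fst).mul hSc |>.continuousOn
      · exact ((continuous_const.add hrc).mul (hrc.pow n)).continuousOn
      · intro p hp
        have := hrpos p hp
        positivity
    · apply ContinuousOn.div continuous_fst.continuousOn (hrc.pow n).continuousOn
      intro p hp
      have := hrpos p hp
      exact pow_ne_zero _ this.ne'

private lemma unif_small (n : ℕ) (hn : 3 ≤ n) {ε : ℝ} (hε : 0 < ε) :
    ∃ δ > 0, δ ≤ 1/2 ∧ ∀ h : ℝ, |h| < δ → ∀ a ∈ Set.Icc (-1:ℝ) 1, |GG n h a| ≤ ε := by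
  have huc := Metric.uniformContinuousOn_iff.mp
    (KK_compact.uniformContinuousOn_of_continuous (GG_contOn n)) ε hε
  obtain ⟨δ, hδ, H⟩ := huc
  refine ⟨min δ (1/2), lt_min hδ (by norm_num), min_le_right _ _, ?_⟩
  intro h hh a ha
  have hh2 : |h| ≤ 1/2 := le_of_lt (lt_of_lt_of_le hh (min_le_right _ _))
  have hmem : (h, a) ∈ KK := by
    rcases abs_le.mp hh2 with ⟨l, u⟩
    exact ⟨⟨by linarith, u⟩, ha⟩
  have hmem0 : ((0:ℝ), a) ∈ KK := ⟨⟨by norm_num, by norm_num⟩, ha⟩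
  have hd : dist (h, a) ((0:ℝ), a) < δ := by
    rw [Prod.dist_eq]
    simp [Real.dist_eq]
    exact lt_of_lt_of_le hh (min_le_left _ _)
  have := H _ hmem _ hmem0 hd
  rw [Real.dist_eq, GG_zero n hn, sub_zero] at this
  exact this.le

/-! ### Finiteness of the Hausdorff measure of the sphere -/

private lemma proj_lip {E : Type*} [NormedAddCommGroup E] [NormedSpace ℝ E] :
    LipschitzOnWith 2 (fun x : E => ‖x‖⁻¹ • x) {x : E | 1 ≤ ‖x‖} := by
  rw [lipschitzOnWith_iff_dist_le_mul]
  intro x hx y hy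
  simp only [Set.mem_setOf_eq] at hx hy
  have hx0 : (0:ℝ) < ‖x‖ := lt_of_lt_of_le one_pos hx
  have hy0 : (0:ℝ) < ‖y‖ := lt_of_lt_of_le one_pos hy
  rw [dist_eq_norm, dist_eq_norm]
  have hdec : ‖x‖⁻¹ • x - ‖y‖⁻¹ • y = ‖x‖⁻¹ • (x - y) + (‖x‖⁻¹ - ‖y‖⁻¹) • y := by
    module
  rw [hdec]
  have h1 : ‖‖x‖⁻¹ • (x - y)‖ ≤ ‖x - y‖ := by
    rw [norm_smul, Real.norm_eq_abs, abs_of_pos (inv_pos.mpr hx0)]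
    have hinv : ‖x‖⁻¹ ≤ 1 := by
      rw [inv_le_one_iff₀]; right; exact hx
    nlinarith [norm_nonneg (x - y)]
  have h2 : ‖(‖x‖⁻¹ - ‖y‖⁻¹) • y‖ ≤ ‖x - y‖ := by
    rw [norm_smul, Real.norm_eq_abs]
    have key : |‖x‖⁻¹ - ‖y‖⁻¹| = |‖y‖ - ‖x‖| / (‖x‖ * ‖y‖) := by
      rw [inv_sub_inv hx0.ne' hy0.ne', abs_div, abs_of_pos (mul_pos hx0 hy0)]
    rw [key]
    have habs : |‖y‖ - ‖x‖| ≤ ‖x - y‖ := by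
      rw [abs_sub_comm]; exact abs_norm_sub_norm_le x y
    have e1 : |‖y‖ - ‖x‖| / (‖x‖ * ‖y‖) * ‖y‖ = |‖y‖ - ‖x‖| / ‖x‖ := by
      field_simp
    rw [e1]
    calc |‖y‖ - ‖x‖| / ‖x‖ ≤ |‖y‖ - ‖x‖| := div_le_self (abs_nonneg _) hx
      _ ≤ ‖x - y‖ := habs
  calc ‖‖x‖⁻¹ • (x - y) + (‖x‖⁻¹ - ‖y‖⁻¹) • y‖
      ≤ ‖‖x‖⁻¹ • (x - y)‖ + ‖(‖x‖⁻¹ - ‖y‖⁻¹) • y‖ := norm_add_le _ _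
    _ ≤ ‖x - y‖ + ‖x - y‖ := add_le_add h1 h2
    _ = ((2:NNReal):ℝ) * ‖x - y‖ := by push_cast; ring

private def emap (n : ℕ) (j : Fin n) (σ : Bool) : ({k : Fin n // k ≠ j} → ℝ) → (Fin n → ℝ) :=
  fun u k => if hk : k = j then (if σ then 1 else -1) else u ⟨k, hk⟩

private def Lmap (n : ℕ) : (Fin n → ℝ) → Euc n := ⇑(WithLp.equiv 2 (Fin n → ℝ)).symm

private def projmap (n : ℕ) : Euc n → Euc n := fun x => ‖x‖⁻¹ • x

private lemma emap_lip (n : ℕ) (j : Fin n) (σ : Bool) : LipschitzWith 1 (emap n j σ) := by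
  rw [lipschitzWith_iff_dist_le_mul]
  intro u v
  rw [NNReal.coe_one, one_mul]
  apply dist_pi_le_iff dist_nonneg |>.mpr
  intro k
  unfold emap
  by_cases hk : k = j
  · simp [hk]
  · simp only [hk, dif_neg, not_false_iff]
    exact dist_le_pi_dist u v ⟨k, hk⟩

private lemma Lmap_lip (n : ℕ) :
    LipschitzWith ((Fintype.card (Fin n) : ℝ≥0) ^ ((1:ℝ≥0∞)/2).toReal) (Lmap n) := by
  apply (PiLp.antilipschitzWith_ofLp 2 (fun _ : Fin n => ℝ)).to_rightInverse
  exact (WithLp.equiv 2 (Fin n → ℝ)).apply_symm_apply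

private lemma emap_in_S (n : ℕ) (j : Fin n) (σ : Bool) (u : {k : Fin n // k ≠ j} → ℝ) :
    1 ≤ ‖Lmap n (emap n j σ u)‖ := by
  have h1 : |Lmap n (emap n j σ u) j| = 1 := by
    have : Lmap n (emap n j σ u) j = emap n j σ u j := rfl
    rw [this]
    unfold emap
    by_cases hσ : σ <;> simp [hσ]
  calc (1:ℝ) = |Lmap n (emap n j σ u) j| := h1.symm
    _ ≤ ‖Lmap n (emap n j σ u)‖ := abs_coord_le _ _

private lemma sphere_cover (n : ℕ) (hn : 1 ≤ n) :
    sphere (0 : Euc n) 1 ⊆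
      ⋃ j : Fin n, ⋃ σ : Bool, (projmap n ∘ Lmap n ∘ emap n j σ) '' closedBall 0 1 := by
  intro y hy
  rw [mem_sphere_zero_iff_norm] at hy
  have : Nonempty (Fin n) := ⟨⟨0, hn⟩⟩
  obtain ⟨j, -, hmax⟩ := Finset.exists_max_image Finset.univ (fun k => |y k|)
    ⟨Classical.arbitrary (Fin n), Finset.mem_univ _⟩
  have hjpos : 0 < |y j| := by
    rcases lt_or_eq_of_le (abs_nonneg (y j)) with h | h
    · exact h
    · exfalso
      have hy0 : y = 0 := by
        ext k
        have := hmax k (Finset.mem_univ k)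
        have : |y k| ≤ 0 := le_of_le_of_eq this h.symm
        simpa using le_antisymm this (abs_nonneg _)
      rw [hy0] at hy
      simp at hy
  set σ : Bool := decide (0 < y j) with hσ
  set u : {k : Fin n // k ≠ j} → ℝ := fun k => y k.1 / |y j| with hu_def
  have hu : u ∈ closedBall (0 : {k : Fin n // k ≠ j} → ℝ) 1 := by
    rw [mem_closedBall_iff_norm, sub_zero]
    apply pi_norm_le_iff_of_nonneg zero_le_one |>.mpr
    intro k
    rw [Real.norm_eq_abs, hu_def, abs_div, abs_abs]
    rw [div_le_one hjpos]
    exact hmax k.1 (Finset.mem_univ _)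
  have hkey : Lmap n (emap n j σ u) = |y j|⁻¹ • y := by
    ext k
    show emap n j σ u k = (|y j|⁻¹ • y) k
    have hsmul : (|y j|⁻¹ • y) k = |y j|⁻¹ * y k := rfl
    unfold emap
    by_cases hk : k = j
    · subst hk
      rw [hsmul]
      rcases lt_or_gt_of_ne (fun h0 => by simp [h0] at hjpos : y k ≠ 0) with h | h
      · have : σ = false := by simp [hσ, not_lt.mpr h.le, decide_eq_false]
        rw [this, abs_of_neg h]
        field_simp
        simp [h.ne]
      · have : σ = true := by simp [hσ, h]
        rw [this, abs_of_pos h]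
        simp
        field_simp
    · simp only [hk, dif_neg, not_false_iff]
      rw [hsmul, hu_def]
      ring
  refine Set.mem_iUnion.mpr ⟨j, Set.mem_iUnion.mpr ⟨σ, ⟨u, hu, ?_⟩⟩⟩
  show projmap n (Lmap n (emap n j σ u)) = y
  rw [hkey]
  unfold projmap
  rw [norm_smul, Real.norm_eq_abs, abs_inv, abs_abs, hy, mul_one, inv_inv, smul_smul,
    mul_inv_cancel₀ hjpos.ne', one_smul]

private lemma sphere_hmeas_ne_top (n : ℕ) (hn : 1 ≤ n) :
    μH[(n:ℝ) - 1] (sphere (0 : Euc n) 1) ≠ ⊤ := by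
  set d : ℝ := (n:ℝ) - 1 with hd_def
  have hd : 0 ≤ d := by
    simp only [hd_def, sub_nonneg]
    exact_mod_cast hn
  apply ne_top_of_le_ne_top ?_ (measure_mono (sphere_cover n hn))
  apply ne_top_of_le_ne_top ?_ (measure_iUnion_le _)
  rw [tsum_fintype]
  apply (ENNReal.sum_lt_top.mpr ?_).ne
  intro j _
  apply lt_of_le_of_lt (measure_iUnion_le _)
  rw [tsum_fintype]
  apply ENNReal.sum_lt_top.mpr
  intro σ _
  have hcard : ((Fintype.card {k : Fin n // k ≠ j} : ℕ) : ℝ) = d := by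
    have : Fintype.card {k : Fin n // k ≠ j} = n - 1 := by
      rw [Fintype.card_subtype_compl, Fintype.card_subtype_eq, Fintype.card_fin]
    rw [this, hd_def]
    push_cast [hn]
    ring
  have hvol : μH[d] (closedBall (0 : {k : Fin n // k ≠ j} → ℝ) 1) < ⊤ := by
    rw [← hcard, hausdorffMeasure_pi_real]
    exact measure_closedBall_lt_top
  have himg : (projmap n ∘ Lmap n ∘ emap n j σ) '' closedBall 0 1
      = projmap n '' (Lmap n '' (emap n j σ '' closedBall 0 1)) := by
    simp [Set.image_image, Function.comp]
  rw [himg]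
  have hsubS : Lmap n '' (emap n j σ '' closedBall 0 1) ⊆ {x : Euc n | 1 ≤ ‖x‖} := by
    rintro x ⟨v, ⟨u, hu, rfl⟩, rfl⟩
    exact emap_in_S n j σ u
  have step1 := (proj_lip.mono hsubS).hausdorffMeasure_image_le hd
  have step2 := (Lmap_lip n).hausdorffMeasure_image_le hd (emap n j σ '' closedBall 0 1)
  have step3 := (emap_lip n j σ).hausdorffMeasure_image_le hd (closedBall 0 1)
  have hfin3 : μH[d] (emap n j σ '' closedBall 0 1) < ⊤ := by
    apply lt_of_le_of_lt step3
    apply ENNReal.mul_lt_top ?_ hvol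
    exact ENNReal.rpow_lt_top_of_nonneg hd ENNReal.coe_ne_top
  have hfin2 : μH[d] (Lmap n '' (emap n j σ '' closedBall 0 1)) < ⊤ := by
    apply lt_of_le_of_lt step2
    apply ENNReal.mul_lt_top ?_ hfin3
    exact ENNReal.rpow_lt_top_of_nonneg hd ENNReal.coe_ne_top
  unfold projmap
  apply lt_of_le_of_lt step1
  apply ENNReal.mul_lt_top ?_ hfin2
  exact ENNReal.rpow_lt_top_of_nonneg hd ENNReal.coe_ne_top

/-- L¹-convergence on the unit sphere of the difference quotients of
the Poisson kernel at the origin to `yᵢ/α(n)`. -/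
theorem stmt6 (n : ℕ) (hn : 3 ≤ n) (i : Fin n) :
    Tendsto (fun h : ℝ =>
        ∫ y in sphere (0 : Euc n) 1,
          |y i / alphaB n -
              (PoisK n (h • EuclideanSpace.single i 1) y - PoisK n 0 y) / h|
            ∂(μH[(n : ℝ) - 1]))
      (𝓝[≠] (0 : ℝ)) (𝓝 0) := by
  have hμ : μH[(n:ℝ) - 1] (sphere (0 : Euc n) 1) ≠ ⊤ :=
    sphere_hmeas_ne_top n (by omega)
  set M : ℝ := (μH[(n:ℝ) - 1] (sphere (0 : Euc n) 1)).toReal with hM_def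
  have hM0 : 0 ≤ M := ENNReal.toReal_nonneg
  rw [Metric.tendsto_nhds]
  intro ε hε
  have hε' : 0 < ε / (M + 1) := by positivity
  obtain ⟨δ, hδ0, hδhalf, Hδ⟩ := unif_small n hn hε'
  have hball : ∀ᶠ h in 𝓝[≠] (0:ℝ), |h| < δ := by
    apply eventually_nhdsWithin_of_eventually_nhds
    have := Metric.ball_mem_nhds (0:ℝ) hδ0
    filter_upwards [this] with h hh
    rw [mem_ball, Real.dist_eq, sub_zero] at hh
    exact hh
  filter_upwards [hball, self_mem_nhdsWithin] with h hhδ hh0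
  rw [Set.mem_compl_iff, Set.mem_singleton_iff] at hh0
  rw [Real.dist_eq, sub_zero]
  have hhhalf : |h| ≤ 1/2 := le_trans hhδ.le hδhalf
  have hEq : Set.EqOn
      (fun y : Euc n => |y i / alphaB n -
        (PoisK n (h • EuclideanSpace.single i 1) y - PoisK n 0 y) / h|)
      (fun y : Euc n => |GG n h (y i)|) (sphere (0 : Euc n) 1) := by
    intro y hy
    rw [mem_sphere_zero_iff_norm] at hy
    simp only
    rw [key_id n i hh0 hhhalf hy]
  rw [setIntegral_congr_fun isClosed_sphere.measurableSet hEq]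
  have hmapsto : ∀ y ∈ sphere (0 : Euc n) 1, y i ∈ Set.Icc (-1:ℝ) 1 := by
    intro y hy
    rw [mem_sphere_zero_iff_norm] at hy
    have := abs_coord_le y i
    rw [hy] at this
    exact abs_le.mp this
  have hC : ∀ y ∈ sphere (0 : Euc n) 1, ‖|GG n h (y i)|‖ ≤ ε / (M + 1) := by
    intro y hy
    rw [Real.norm_eq_abs, abs_abs]
    exact Hδ h hhδ (y i) (hmapsto y hy)
  have hfm : AEStronglyMeasurable (fun y : Euc n => |GG n h (y i)|)
      ((μH[(n:ℝ) - 1] : Measure (Euc n)).restrict (sphere 0 1)) := by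
    have c2 : Continuous (fun y : Euc n => y i) := by
      exact (continuous_apply i).comp (PiLp.continuous_ofLp 2 (fun _ : Fin n => ℝ))
    have c1 : ContinuousOn (fun y : Euc n => GG n h (y i)) (sphere (0 : Euc n) 1) := by
      apply (GG_contOn n).comp
        (Continuous.continuousOn (by fun_prop : Continuous (fun y : Euc n => (h, y i))))
      intro y hy
      have := hmapsto y hy
      rcases abs_le.mp hhhalf with ⟨l, u⟩
      exact ⟨⟨by linarith, u⟩, this⟩
    exact (c1.abs.aestronglyMeasurable isClosed_sphere.measurableSet)
  have hb := norm_setIntegral_le_of_norm_le_const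
    (lt_top_iff_ne_top.mpr hμ) hC
  rw [Real.norm_eq_abs] at hb
  calc |∫ y in sphere (0 : Euc n) 1, |GG n h (y i)| ∂(μH[(n:ℝ) - 1])|
      ≤ ε / (M + 1) * M := hb
    _ < ε := by
        rw [div_mul_eq_mul_div, div_lt_iff₀ (by positivity : (0:ℝ) < M + 1)]
        nlinarith

end
end

section
/- Let n ≥ 3 and let G(x,y) = Φ(y − x) − 1/(n(n−2)α(n)) · ‖|y|·x − y/|y|‖^{−(n−2)} be the Green's function of the unit ball in ℝⁿ. Then for every x with |x| < 1 and every y with |y| = 1, the directional derivative of the map z ↦ G(x, z) at the point y in the direction y (the outward normal derivative) exists and equals ∂G/∂ν(x,y) = −(1/(n·α(n))) · (1 − |x|²)/|x − y|ⁿ. -/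
open MeasureTheory Filter Metric Topology

noncomputable section

lemma norm_add_smul_sq (n : ℕ) (u v : Euc n) (t : ℝ) :
    ‖u + t • v‖ = Real.sqrt (‖u‖^2 + 2*(inner ℝ u v : ℝ)*t + ‖v‖^2*t^2) := by
  rw [← Real.sqrt_sq (norm_nonneg (u + t • v))]
  congr 1
  rw [norm_add_sq_real, real_inner_smul_right, norm_smul, Real.norm_eq_abs, mul_pow, sq_abs]
  ring

lemma aux_deriv (c : ℝ) (m : ℕ) (A B C : ℝ) (hA : 0 < A) :
    HasDerivAt (fun t : ℝ => c / (Real.sqrt (A + 2*B*t + C*t^2))^m)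
      ((0 * (Real.sqrt A)^m - c * ((m : ℝ) * (Real.sqrt A)^(m-1) * ((2*B) / (2*Real.sqrt A)))) / ((Real.sqrt A)^m)^2) 0 := by
  have hp : HasDerivAt (fun t : ℝ => A + 2*B*t + C*t^2) (2*B) 0 := by
    have h1 : HasDerivAt (fun t : ℝ => A + 2*B*t + C*t^2)
        (0 + 2*B*1 + C*(↑2*(0:ℝ)^(2-1))) 0 :=
      ((hasDerivAt_const _ A).add ((hasDerivAt_id (0:ℝ)).const_mul (2*B))).add
        ((hasDerivAt_pow 2 (0:ℝ)).const_mul C)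
    simpa using h1
  have hs : HasDerivAt (fun t : ℝ => Real.sqrt (A + 2*B*t + C*t^2))
      ((2*B) / (2*Real.sqrt A)) 0 := by
    have := hp.sqrt (by simpa using hA.ne')
    simpa using this
  have hpow := hs.pow m
  have hR : (0:ℝ) < Real.sqrt A := Real.sqrt_pos.2 hA
  have hne : (Real.sqrt (A + 2*B*0 + C*0^2))^m ≠ 0 := by
    simpa using (pow_pos hR m).ne'
  have := (hasDerivAt_const (0:ℝ) c).div hpow hne
  simp at this
  simp only [zero_mul, zero_sub]
  exact this

/-- the outward normal derivative of the Green's function of the unit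
ball at a boundary point `y` equals minus the Poisson kernel. -/
theorem stmt13 (n : ℕ) (hn : 3 ≤ n) (x y : Euc n) (hx : ‖x‖ < 1) (hy : ‖y‖ = 1) :
    HasLineDerivAt ℝ (fun z => GreenB n x z)
      (-(1 / (n * alphaB n)) * ((1 - ‖x‖ ^ 2) / ‖x - y‖ ^ n)) y y := by
  obtain ⟨k, rfl⟩ : ∃ k, n = k + 3 := ⟨n - 3, (Nat.sub_add_cancel hn).symm⟩
  have hα : 0 < alphaB (k+3) := by
    have h1 : (0:ENNReal) < volume (ball (0:Euc (k+3)) 1) := measure_ball_pos _ _ one_pos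
    have h2 : volume (ball (0:Euc (k+3)) 1) < ⊤ := measure_ball_lt_top
    exact ENNReal.toReal_pos h1.ne' h2.ne
  have hxy : x ≠ y := fun h => absurd (h ▸ hy) hx.ne
  have hr : (0:ℝ) < ‖x - y‖ := by rwa [norm_pos_iff, sub_ne_zero]
  have hryx : ‖y - x‖ = ‖x - y‖ := norm_sub_rev y x
  set c : ℝ := 1 / ((k+3 : ℕ) * (((k+3:ℕ) : ℝ) - 2) * alphaB (k+3)) with hc
  have h1 := aux_deriv c (k+1) (‖y - x‖^2) (inner ℝ (y-x) y) (‖y‖^2)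
    (by rw [hryx]; positivity)
  have h2 := aux_deriv c (k+1) (‖x - y‖^2) (inner ℝ (x-y) x) (‖x‖^2) (by positivity)
  have hF := h1.sub h2
  have heq : (fun t : ℝ => GreenB (k+3) x (y + t • y)) =ᶠ[𝓝 0]
      (fun t => c / (Real.sqrt (‖y-x‖^2 + 2*(inner ℝ (y-x) y : ℝ)*t + ‖y‖^2*t^2))^(k+1)
        - c / (Real.sqrt (‖x-y‖^2 + 2*(inner ℝ (x-y) x : ℝ)*t + ‖x‖^2*t^2))^(k+1)) := by
    filter_upwards [Ioo_mem_nhds (by norm_num : (-1:ℝ) < 0) (by norm_num : (0:ℝ) < 1)] with t ht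
    obtain ⟨ht1, ht2⟩ := ht
    have h1t : (0:ℝ) < 1 + t := by linarith
    rw [← norm_add_smul_sq, ← norm_add_smul_sq]
    have e1 : y + t • y - x = (y - x) + t • y := by rw [add_sub_right_comm]
    have hz : y + t • y = (1+t) • y := by rw [add_smul, one_smul]
    have hzn : ‖y + t • y‖ = 1 + t := by
      rw [hz, norm_smul, Real.norm_eq_abs, abs_of_pos h1t, hy, mul_one]
    have e2 : ‖y + t•y‖ • x - ‖y + t•y‖⁻¹ • (y + t•y) = (x - y) + t • x := by
      rw [hzn, hz, smul_smul, inv_mul_cancel₀ h1t.ne', one_smul, add_smul, one_smul,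
        add_sub_right_comm]
    simp only [GreenB, e1, e2, show k+3-2 = k+1 from rfl, mul_one_div, hc]
  have hG := hF.congr_of_eventuallyEq heq
  show HasDerivAt (fun t : ℝ => GreenB (k+3) x (y + t • y)) _ 0
  convert hG using 1
  · rfl
  · rfl
  have hs1 : Real.sqrt (‖y - x‖^2) = ‖x - y‖ := by rw [Real.sqrt_sq (norm_nonneg _), hryx]
  have hs2 : Real.sqrt (‖x - y‖^2) = ‖x - y‖ := Real.sqrt_sq (norm_nonneg _)
  have hB1 : (inner ℝ (y-x) y : ℝ) = 1 - inner ℝ x y := by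
    rw [inner_sub_left, real_inner_self_eq_norm_sq, hy]; norm_num
  have hB2 : (inner ℝ (x-y) x : ℝ) = ‖x‖^2 - inner ℝ x y := by
    rw [inner_sub_left, real_inner_self_eq_norm_sq, real_inner_comm]
  rw [hs1, hs2, hB1, hB2, hc]
  have h3 : ((k:ℝ)+3) ≠ 0 := by positivity
  have h1' : ((k:ℝ)+1) ≠ 0 := by positivity
  set r := ‖x - y‖
  push_cast
  rw [show ((k:ℝ)+3-2) = (k:ℝ)+1 by ring, div_sub_div_same,
    eq_div_iff (by positivity : ((r:ℝ)^(k+1))^2 ≠ 0)]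
  field_simp
  ring
end
end

section
/- Let n ≥ 3, let 0 < h < 1, let i ∈ {1, …, n}, and let y ∈ ℝⁿ with 0 < |y| ≤ 1. Then ‖|y|·h·eᵢ − y/|y|‖ ≥ 1 − h and | 1 − ‖|y|·h·eᵢ − y/|y|‖^{−(n−2)} | ≤ ((n−2)/2) · h · ( 1 + (1 − h)^{−(n−1)} ), where eᵢ is the i-th standard basis vector. -/
open Finset in
lemma key_real (m : ℕ) (h r : ℝ) (h0 : 0 < h) (h1 : h < 1)
    (hr : 1 - h ≤ r) (hr2 : |r - 1| ≤ h) :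
    |1 - 1 / r ^ m| ≤ (m : ℝ) / 2 * h * (1 + 1 / (1 - h) ^ (m + 1)) := by
  have hh : (0:ℝ) < 1 - h := by linarith
  have hrpos : 0 < r := by linarith
  have hrne : r ≠ 0 := ne_of_gt hrpos
  set t : ℝ := (1 - h)⁻¹ with ht
  have ht1 : 1 ≤ t := (one_le_inv_iff₀.mpr ⟨hh, by linarith⟩)
  have hinvr : 1 / r ≤ t := by
    rw [div_le_iff₀ hrpos, ht]
    rw [inv_mul_eq_div, le_div_iff₀ hh]
    linarith
  have hinvr0 : 0 ≤ 1 / r := by positivity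
  -- identity
  have hA : 1 - 1 / r ^ m = (r - 1) * ∑ j ∈ range m, (1 / r) ^ (j + 1) := by
    rw [Finset.mul_sum]
    have := Finset.sum_range_sub' (fun j => (1 / r) ^ j) m
    rw [show (1:ℝ) - 1 / r ^ m = (1/r)^0 - (1/r)^m by simp [one_div, inv_pow], ← this]
    apply Finset.sum_congr rfl
    intro j _
    field_simp
    linear_combination (-(1/r)^j) * one_div_mul_cancel hrne
  -- termwise bound
  have hterm : ∀ j ∈ range m, (1 / r) ^ (j + 1) ≤ t ^ (j + 1) := by
    intro j _
    exact pow_le_pow_left₀ hinvr0 hinvr _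
  have hsum1 : ∑ j ∈ range m, (1 / r) ^ (j + 1) ≤ ∑ j ∈ range m, t ^ (j + 1) :=
    Finset.sum_le_sum hterm
  -- pairing bound
  have hpair : ∑ j ∈ range m, t ^ (j + 1) ≤ (m : ℝ) / 2 * (1 + t ^ (m + 1)) := by
    have hrefl : ∑ j ∈ range m, t ^ (m - j) = ∑ j ∈ range m, t ^ (j + 1) := by
      rw [← Finset.sum_range_reflect]
      apply Finset.sum_congr rfl
      intro j hj
      congr 1
      have : j < m := Finset.mem_range.mp hj
      omega
    have h2 : 2 * ∑ j ∈ range m, t ^ (j + 1) ≤ (m : ℝ) * (1 + t ^ (m + 1)) := by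
      have : ∀ j ∈ range m, t ^ (j + 1) + t ^ (m - j) ≤ 1 + t ^ (m + 1) := by
        intro j hj
        have hjm : j < m := Finset.mem_range.mp hj
        have hmul : t ^ (j + 1) * t ^ (m - j) = t ^ (m + 1) := by
          rw [← pow_add]; congr 1; omega
        have h1' : 1 ≤ t ^ (j + 1) := one_le_pow₀ ht1
        have h2' : 1 ≤ t ^ (m - j) := one_le_pow₀ ht1
        nlinarith [mul_nonneg (sub_nonneg.mpr h1') (sub_nonneg.mpr h2')]
      calc 2 * ∑ j ∈ range m, t ^ (j + 1)
          = ∑ j ∈ range m, (t ^ (j + 1) + t ^ (m - j)) := by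
            rw [Finset.sum_add_distrib, hrefl]; ring
        _ ≤ ∑ j ∈ range m, (1 + t ^ (m + 1)) := Finset.sum_le_sum this
        _ = (m : ℝ) * (1 + t ^ (m + 1)) := by simp [Finset.sum_const, nsmul_eq_mul]; ring
    linarith
  have hsum0 : 0 ≤ ∑ j ∈ range m, (1 / r) ^ (j + 1) :=
    Finset.sum_nonneg fun j _ => by positivity
  have htm : t ^ (m + 1) = 1 / (1 - h) ^ (m + 1) := by
    rw [ht, one_div, inv_pow]
  calc |1 - 1 / r ^ m| = |r - 1| * ∑ j ∈ range m, (1 / r) ^ (j + 1) := by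
        rw [hA, abs_mul, abs_of_nonneg hsum0]
    _ ≤ h * ∑ j ∈ range m, t ^ (j + 1) := by
        apply mul_le_mul hr2 hsum1 hsum0 (le_of_lt h0)
    _ ≤ h * ((m : ℝ) / 2 * (1 + t ^ (m + 1))) := by
        apply mul_le_mul_of_nonneg_left hpair (le_of_lt h0)
    _ = (m : ℝ) / 2 * h * (1 + 1 / (1 - h) ^ (m + 1)) := by rw [htm]; ring

open Metric

noncomputable section

/-- for `0 < h < 1` and `0 < |y| ≤ 1`, the bounds
`‖|y|·h·eᵢ − y/|y|‖ ≥ 1 − h` and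
`|1 − ‖|y|·h·eᵢ − y/|y|‖^{−(n−2)}| ≤ ((n−2)/2)·h·(1 + (1−h)^{−(n−1)})`. -/
theorem stmt19 (n : ℕ) (hn : 3 ≤ n) (h : ℝ) (h0 : 0 < h) (h1 : h < 1) (i : Fin n)
    (y : Euc n) (hy0 : 0 < ‖y‖) (hy1 : ‖y‖ ≤ 1) :
    1 - h ≤ ‖(‖y‖ * h) • EuclideanSpace.single i 1 - ‖y‖⁻¹ • y‖ ∧
      |1 - 1 / ‖(‖y‖ * h) • EuclideanSpace.single i 1 - ‖y‖⁻¹ • y‖ ^ (n - 2)| ≤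
        ((n : ℝ) - 2) / 2 * h * (1 + 1 / (1 - h) ^ (n - 1)) := by
  set a : Euc n := (‖y‖ * h) • EuclideanSpace.single i 1 with ha
  set b : Euc n := ‖y‖⁻¹ • y with hb
  have hna : ‖a‖ = ‖y‖ * h := by
    rw [ha, norm_smul, EuclideanSpace.norm_single, norm_one, mul_one, Real.norm_eq_abs]
    exact abs_of_nonneg (by positivity)
  have hnb : ‖b‖ = 1 := by
    rw [hb, norm_smul, norm_inv, norm_norm, inv_mul_cancel₀ (ne_of_gt hy0)]
  have hah : ‖a‖ ≤ h := by
    rw [hna]; nlinarith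
  set r := ‖a - b‖ with hrdef
  have hlow : 1 - h ≤ r := by
    have := norm_sub_norm_le b a
    rw [norm_sub_rev b a, hnb] at this
    linarith [hah]
  have habs : |r - 1| ≤ h := by
    have := abs_norm_sub_norm_le (a - b) (-b)
    rw [norm_neg, hnb, sub_neg_eq_add, sub_add_cancel] at this
    exact le_trans this hah
  refine ⟨hlow, ?_⟩
  have := key_real (n - 2) h r h0 h1 hlow habs
  have hc : ((n - 2 : ℕ) : ℝ) = (n : ℝ) - 2 := by
    have : 2 ≤ n := by omega
    push_cast [Nat.cast_sub this]
    ring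
  have he : n - 2 + 1 = n - 1 := by omega
  rw [hc, he] at this
  exact this
end
end
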